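/- arXiv:2204.13946 — 6 statements merged into one kernel-verified Lean document; each statement's English description precedes it below -/
import Mathlib

section
/- Let F(α) be the free group on a set α and let a ∈ α. Then for every x ∈ F(α), x commutes with the generator a if and only if x is an integer power of a; that is, the centralizer of a in F(α) equals the cyclic subgroup ⟨a⟩ = {a^n : n ∈ ℤ}. -/
namespace FreeGroupCentralizerAux

variable {α : Type*} [DecidableEq α]

lemma invRev_cons (p : α × Bool) (L : List (α × Bool)) :
    FreeGroup.invRev (p :: L) = FreeGroup.invRev L ++ [(p.1, !p.2)] := by
  simp [FreeGroup.invRev]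

lemma reduce_cons_of_ne {w : List (α × Bool)} (hw : FreeGroup.reduce w = w)
    (x : α × Bool) (h : ∀ p ∈ w.head?, ¬(x.1 = p.1 ∧ x.2 = !p.2)) :
    FreeGroup.reduce (x :: w) = x :: w := by
  rw [FreeGroup.reduce.cons, hw]
  cases w with
  | nil => rfl
  | cons hd tl =>
    have := h hd (by simp)
    simp [this]

lemma reduce_cancel {b : α} {s : Bool} {t : List (α × Bool)}
    (h : FreeGroup.reduce ((b, s) :: t) = (b, s) :: t) :
    FreeGroup.reduce ((b, !s) :: (b, s) :: t) = t := by
  rw [FreeGroup.reduce.cons, h]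
  simp

lemma toWord_mk_cancel {x : FreeGroup α} {b : α} {s : Bool} {t : List (α × Bool)}
    (hx : x.toWord = (b, s) :: t) :
    (FreeGroup.mk [(b, !s)] * x).toWord = t := by
  have hred : FreeGroup.reduce ((b, s) :: t) = (b, s) :: t := by
    rw [← hx]; exact x.reduce_toWord
  have hmk : FreeGroup.mk [(b, !s)] * x = FreeGroup.mk ((b, !s) :: (b, s) :: t) := by
    conv_lhs => rw [← FreeGroup.mk_toWord (x := x), hx]
    rw [FreeGroup.mul_mk]
    rfl
  rw [hmk, FreeGroup.toWord_mk, reduce_cancel hred]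

lemma toWord_mk_cons {x : FreeGroup α} (p : α × Bool)
    (h : ∀ q ∈ x.toWord.head?, ¬(p.1 = q.1 ∧ p.2 = !q.2)) :
    (FreeGroup.mk [p] * x).toWord = p :: x.toWord := by
  have hmk : FreeGroup.mk [p] * x = FreeGroup.mk (p :: x.toWord) := by
    conv_lhs => rw [← FreeGroup.mk_toWord (x := x)]
    rw [FreeGroup.mul_mk]
    rfl
  rw [hmk, FreeGroup.toWord_mk, reduce_cons_of_ne x.reduce_toWord p h]

lemma of_eq_mk (a : α) : FreeGroup.of a = FreeGroup.mk [(a, true)] := rfl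

lemma inv_of_eq (a : α) : (FreeGroup.of a)⁻¹ = FreeGroup.mk [(a, false)] := by
  rw [of_eq_mk, FreeGroup.inv_mk]
  simp [FreeGroup.invRev]

lemma key (a : α) : ∀ (n : ℕ) (x : FreeGroup α), x.toWord.length ≤ n →
    x * FreeGroup.of a = FreeGroup.of a * x → x ∈ Subgroup.zpowers (FreeGroup.of a) := by
  intro n
  induction n with
  | zero =>
    intro x hl _
    have : x = 1 := by
      rw [← FreeGroup.toWord_eq_nil_iff]
      exact List.eq_nil_of_length_eq_zero (Nat.le_zero.mp hl)
    rw [this]; exact one_mem _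
  | succ m ih =>
    intro x hl hcomm
    rcases hw : x.toWord with _ | ⟨⟨b, s⟩, t⟩
    · have : x = 1 := FreeGroup.toWord_eq_nil_iff.mp hw
      rw [this]; exact one_mem _
    · have hlen : t.length ≤ m := by
        have := hl; rw [hw] at this; simpa using this
      by_cases hb : b = a
      · subst hb
        cases s with
        | true =>
          set y := (FreeGroup.of b)⁻¹ * x with hy
          have hyw : y.toWord = t := by
            rw [hy, inv_of_eq]
            exact toWord_mk_cancel (s := true) hw
          have hycomm : y * FreeGroup.of b = FreeGroup.of b * y := by
            rw [hy, mul_assoc, hcomm]; group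
          have hmem := ih y (hyw ▸ hlen) hycomm
          have hx : x = FreeGroup.of b * y := by rw [hy]; group
          rw [hx]
          exact mul_mem (Subgroup.mem_zpowers _) hmem
        | false =>
          set y := FreeGroup.of b * x with hy
          have hyw : y.toWord = t := by
            rw [hy, of_eq_mk]
            exact toWord_mk_cancel (s := false) hw
          have hycomm : y * FreeGroup.of b = FreeGroup.of b * y := by
            rw [hy, mul_assoc, hcomm]
          have hmem := ih y (hyw ▸ hlen) hycomm
          have hx : x = (FreeGroup.of b)⁻¹ * y := by rw [hy]; group
          rw [hx]
          exact mul_mem (inv_mem (Subgroup.mem_zpowers _)) hmem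
      · exfalso
        -- toWord of (of a * x)
        have h1 : (FreeGroup.of a * x).toWord = (a, true) :: x.toWord := by
          rw [of_eq_mk]
          refine toWord_mk_cons _ ?_
          intro q hq
          rw [hw] at hq
          simp only [List.head?_cons, Option.mem_def, Option.some.injEq] at hq
          subst hq
          exact fun hcon => hb hcon.1.symm
        -- analyze x⁻¹
        have hxinv : x⁻¹.toWord = FreeGroup.invRev x.toWord := FreeGroup.toWord_inv x
        rcases hu : x⁻¹.toWord with _ | ⟨⟨c, r⟩, u⟩
        · rw [hw, hxinv] at *
          have : (FreeGroup.invRev ((b, s) :: t)).length = 0 := by rw [← hxinv, hu]; rfl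
          rw [FreeGroup.invRev_length] at this
          simp at this
        · by_cases hc : c = a ∧ r = true
          · obtain ⟨rfl, rfl⟩ := hc
            have hz : ((FreeGroup.of c)⁻¹ * x⁻¹).toWord = u := by
              rw [inv_of_eq]
              exact toWord_mk_cancel (s := true) hu
            have hxa : x * FreeGroup.of c = ((FreeGroup.of c)⁻¹ * x⁻¹)⁻¹ := by group
            have hlen1 : (x * FreeGroup.of c).toWord.length = u.length := by
              rw [hxa, FreeGroup.toWord_inv, hz, FreeGroup.invRev_length]
            have hlen2 : (x * FreeGroup.of c).toWord.length = x.toWord.length + 1 := by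
              rw [hcomm, h1]; simp
            have hlen3 : x⁻¹.toWord.length = x.toWord.length := by
              rw [hxinv, FreeGroup.invRev_length]
            rw [hu] at hlen3
            simp only [List.length_cons] at hlen3
            omega
          · have hz : ((FreeGroup.of a)⁻¹ * x⁻¹).toWord = (a, false) :: x⁻¹.toWord := by
              rw [inv_of_eq]
              refine toWord_mk_cons _ ?_
              intro q hq
              rw [hu] at hq
              simp only [List.head?_cons, Option.mem_def, Option.some.injEq] at hq
              subst hq
              simp only [not_and]
              intro h h2
              exact hc ⟨h.symm, by simpa using h2.symm⟩
            have hxa : x * FreeGroup.of a = ((FreeGroup.of a)⁻¹ * x⁻¹)⁻¹ := by group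
            have h2 : (x * FreeGroup.of a).toWord = x.toWord ++ [(a, true)] := by
              rw [hxa, FreeGroup.toWord_inv, hz, invRev_cons, hxinv,
                FreeGroup.invRev_invRev]
              rfl
            rw [hcomm, h1, hw] at h2
            simp only [List.cons_append, List.cons.injEq] at h2
            exact hb (congrArg Prod.fst h2.1).symm

end FreeGroupCentralizerAux

/-- In a free group, the centralizer of a generator `a` is the cyclic subgroup `⟨a⟩`:
an element commutes with `a` iff it is an integer power of `a`. -/
theorem stmt_4 (α : Type*) (a : α) (x : FreeGroup α) :
    x * FreeGroup.of a = FreeGroup.of a * x ↔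
      x ∈ Subgroup.zpowers (FreeGroup.of a) := by
  classical
  constructor
  · intro h
    exact FreeGroupCentralizerAux.key a x.toWord.length x le_rfl h
  · rintro ⟨n, rfl⟩
    exact ((Commute.refl (FreeGroup.of a)).zpow_left n).eq
end

section
/- Let F(α) be the free group on a set α, let a, b ∈ α be distinct, and let t be a nonzero integer. Then for every x ∈ F(α), x commutes with a·b^t if and only if x is an integer power of a·b^t; that is, the centralizer of a·b^t in F(α) equals the cyclic subgroup ⟨a·b^t⟩. -/
/-- Two distinct generators of a free group do not commute. -/
lemma freeGroup_of_not_commute {β : Type*} {i j : β} (hij : i ≠ j) :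
    FreeGroup.of i * FreeGroup.of j ≠ FreeGroup.of j * FreeGroup.of i := by
  classical
  intro h
  let f : β → Equiv.Perm (Fin 3) := fun y =>
    if y = i then Equiv.swap 0 1 else if y = j then Equiv.swap 1 2 else 1
  have := congrArg (FreeGroup.lift f) h
  simp only [map_mul, FreeGroup.lift_apply_of] at this
  have hfi : f i = Equiv.swap 0 1 := by simp [f]
  have hfj : f j = Equiv.swap 1 2 := by simp [f, hij.symm]
  rw [hfi, hfj] at this
  revert this; decide

/-- A commutative free group is cyclic. -/
lemma freeGroup_comm_cyclic (G : Type*) [Group G] [IsFreeGroup G]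
    (hcomm : ∀ p q : G, p * q = q * p) :
    ∃ c : G, ∀ y : G, y ∈ Subgroup.zpowers c := by
  classical
  have hsub : Subsingleton (IsFreeGroup.Generators G) := by
    constructor
    intro i j
    by_contra hij
    have := freeGroup_of_not_commute hij
    apply this
    have hc : IsFreeGroup.of (G := G) i * IsFreeGroup.of j = IsFreeGroup.of j * IsFreeGroup.of i :=
      hcomm _ _
    exact (IsFreeGroup.mulEquiv G).injective
      (by rw [map_mul, map_mul]; exact hc)
  by_cases hne : Nonempty (IsFreeGroup.Generators G)
  · obtain ⟨i⟩ := hne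
    refine ⟨IsFreeGroup.of i, fun y => ?_⟩
    have key : ∀ z : FreeGroup (IsFreeGroup.Generators G),
        (IsFreeGroup.mulEquiv G) z ∈ Subgroup.zpowers (IsFreeGroup.of i) := by
      intro z
      induction z using FreeGroup.induction_on with
      | C1 => simpa using Subgroup.one_mem _
      | of y =>
        have : y = i := Subsingleton.elim y i
        subst this
        exact Subgroup.mem_zpowers _
      | inv_of y hy => rw [map_inv]; exact Subgroup.inv_mem _ hy
      | mul y z hy hz => rw [map_mul]; exact Subgroup.mul_mem _ hy hz
    have := key ((IsFreeGroup.mulEquiv G).symm y)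
    simpa using this
  · refine ⟨1, fun y => ?_⟩
    have key : ∀ z : FreeGroup (IsFreeGroup.Generators G),
        (IsFreeGroup.mulEquiv G) z ∈ Subgroup.zpowers (1 : G) := by
      intro z
      induction z using FreeGroup.induction_on with
      | C1 => simpa using Subgroup.one_mem _
      | of y => exact absurd ⟨y⟩ hne
      | inv_of y hy => rw [map_inv]; exact Subgroup.inv_mem _ hy
      | mul y z hy hz => rw [map_mul]; exact Subgroup.mul_mem _ hy hz
    have := key ((IsFreeGroup.mulEquiv G).symm y)
    simpa using this

/-- In a free group, for distinct generators `a ≠ b` and a nonzero integer `t`, the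
centralizer of `a * b^t` is the cyclic subgroup `⟨a * b^t⟩`: an element commutes with
`a * b^t` iff it is an integer power of `a * b^t`. -/
theorem stmt_5 (α : Type*) (a b : α) (hab : a ≠ b) (t : ℤ) (ht : t ≠ 0)
    (x : FreeGroup α) :
    x * (FreeGroup.of a * FreeGroup.of b ^ t) = (FreeGroup.of a * FreeGroup.of b ^ t) * x ↔
      x ∈ Subgroup.zpowers (FreeGroup.of a * FreeGroup.of b ^ t) := by
  classical
  set g : FreeGroup α := FreeGroup.of a * FreeGroup.of b ^ t with hg
  constructor
  · intro h
    -- the subgroup generated by x and g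
    set H : Subgroup (FreeGroup α) := Subgroup.closure {x, g} with hH
    have hxH : x ∈ H := Subgroup.subset_closure (by simp)
    have hgH : g ∈ H := Subgroup.subset_closure (by simp)
    -- H is commutative
    have hcomm : ∀ p q : FreeGroup α, p ∈ H → q ∈ H → p * q = q * p := by
      have hle : H ≤ Subgroup.centralizer {x, g} := by
        rw [hH]
        apply Subgroup.closure_le _ |>.mpr
        intro s hs
        rcases hs with rfl | hs
        · intro q hq
          rcases hq with rfl | hq
          · rfl
          · simp at hq; rw [hq]; exact h.symm
        · simp at hs; subst hs
          intro q hq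
          rcases hq with rfl | hq
          · exact h
          · simp at hq; rw [hq]
      have hle2 : H ≤ Subgroup.centralizer (H : Set (FreeGroup α)) := by
        rw [hH]
        apply Subgroup.closure_le _ |>.mpr
        intro s hs
        intro q hq
        have := hle hq s hs
        exact this.symm
      intro p q hp hq
      exact (hle2 hp q hq).symm
    have hcommH : ∀ p q : H, p * q = q * p := by
      intro p q
      ext
      exact hcomm _ _ p.2 q.2
    obtain ⟨c, hc⟩ := freeGroup_comm_cyclic H hcommH
    obtain ⟨n, hn⟩ := hc ⟨g, hgH⟩
    obtain ⟨m, hm⟩ := hc ⟨x, hxH⟩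
    -- push to the ambient group
    have hn' : (c : FreeGroup α) ^ n = g := by
      have := congrArg (Subtype.val) hn
      simpa using this
    have hm' : (c : FreeGroup α) ^ m = x := by
      have := congrArg (Subtype.val) hm
      simpa using this
    -- abelianization coefficient at a
    let φ : FreeGroup α →* Multiplicative ℤ :=
      FreeGroup.lift fun y => Multiplicative.ofAdd (if y = a then (1 : ℤ) else 0)
    have hφg : φ g = Multiplicative.ofAdd (1 : ℤ) := by
      simp [φ, hg, FreeGroup.lift_apply_of, Ne.symm hab]
    have hφc := congrArg φ hn'
    rw [map_zpow, hφg] at hφc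
    have hsolve : n * Multiplicative.toAdd (φ (c : FreeGroup α)) = 1 := by
      have := congrArg Multiplicative.toAdd hφc
      simpa [toAdd_zpow, mul_comm] using this
    have hunit : IsUnit n := IsUnit.of_mul_eq_one _ hsolve
    rcases Int.isUnit_iff.mp hunit with rfl | rfl
    · -- n = 1 : c = g
      rw [zpow_one] at hn'
      exact ⟨m, by show g ^ m = x; rw [← hn']; exact hm'⟩
    · -- n = -1 : c = g⁻¹
      have : (c : FreeGroup α) = g⁻¹ := by
        rw [← hn']; group
      refine ⟨-m, ?_⟩
      show g ^ (-m) = x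
      rw [← hm', this]
      group
  · rintro ⟨n, rfl⟩
    exact ((Commute.refl g).zpow_left n).eq
end

section
/- Let F(α) be the free group on a set α and let a, b ∈ α be distinct generators. For all integers t₁, t₂, t₃ the following are equivalent: (i) t₃ = t₁ · t₂; (ii) there exist u, v ∈ F(α) such that u commutes with b, v commutes with a·u, φ_b(u) = t₁, φ_a(v) = t₂, and φ_b(v) = t₃. -/
/-- Distinct generators of a free group do not commute. -/
lemma freeGroup_of_not_commute_s6 {β : Type*} {x y : β} (h : x ≠ y) :
    ¬ Commute (FreeGroup.of x) (FreeGroup.of y) := by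
  classical
  intro hc
  let f : β → Equiv.Perm (Fin 3) := fun c =>
    if c = x then Equiv.swap 0 1 else if c = y then Equiv.swap 1 2 else 1
  have hc' := congrArg (FreeGroup.lift f) hc
  simp only [map_mul, FreeGroup.lift_apply_of] at hc'
  have hx : f x = Equiv.swap 0 1 := by simp [f]
  have hy : f y = Equiv.swap 1 2 := by simp [f, h.symm]
  rw [hx, hy] at hc'
  have : (Equiv.swap (0 : Fin 3) 1) * Equiv.swap 1 2 ≠ Equiv.swap 1 2 * Equiv.swap 0 1 := by
    decide
  exact this hc'

/-- A free group in which all elements commute is cyclic. -/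
lemma isFreeGroup_comm_cyclic {G : Type*} [Group G] [IsFreeGroup G]
    (h : ∀ p q : G, Commute p q) : ∃ z : G, ∀ x : G, ∃ n : ℤ, x = z ^ n := by
  obtain ⟨ι, ⟨bB⟩⟩ := IsFreeGroup.nonempty_basis (G := G)
  have hsub : Subsingleton ι := by
    constructor
    intro i j
    by_contra hij
    apply freeGroup_of_not_commute_s6 hij
    have := h (bB.repr.symm (FreeGroup.of i)) (bB.repr.symm (FreeGroup.of j))
    have := congrArg bB.repr this
    exact (by simpa [map_mul] using this : FreeGroup.of i * FreeGroup.of j = _)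
  rcases isEmpty_or_nonempty ι with hi | hi
  · refine ⟨1, fun x => ⟨0, ?_⟩⟩
    have : ∀ w : FreeGroup ι, w = 1 := by
      intro w
      induction w using FreeGroup.induction_on with
      | C1 => rfl
      | of c => exact (hi.false c).elim
      | inv_of c _ => exact (hi.false c).elim
      | mul p q hp hq => rw [hp, hq, one_mul]
    have hx : bB.repr x = 1 := this _
    have := congrArg bB.repr.symm hx
    simpa using this
  · obtain ⟨i₀⟩ := hi
    refine ⟨bB.repr.symm (FreeGroup.of i₀), fun x => ?_⟩
    have key : ∀ w : FreeGroup ι, ∃ n : ℤ, w = FreeGroup.of i₀ ^ n := by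
      intro w
      induction w using FreeGroup.induction_on with
      | C1 => exact ⟨0, by simp⟩
      | of c => exact ⟨1, by rw [Subsingleton.elim c i₀, zpow_one]⟩
      | inv_of c _ => exact ⟨-1, by rw [Subsingleton.elim c i₀, zpow_neg_one]⟩
      | mul p q hp hq =>
        obtain ⟨m, hm⟩ := hp
        obtain ⟨n, hn⟩ := hq
        exact ⟨m + n, by rw [hm, hn, zpow_add]⟩
    obtain ⟨n, hn⟩ := key (bB.repr x)
    refine ⟨n, ?_⟩
    have := congrArg bB.repr.symm hn
    simpa [map_zpow] using this

/-- Commuting elements of a free group are powers of a common element. -/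
lemma freeGroup_commute_common_power {β : Type*} {x y : FreeGroup β} (h : Commute x y) :
    ∃ (z : FreeGroup β) (m n : ℤ), x = z ^ m ∧ y = z ^ n := by
  set H := Subgroup.closure ({x, y} : Set (FreeGroup β)) with hH
  have hxH : x ∈ H := Subgroup.subset_closure (by simp)
  have hyH : y ∈ H := Subgroup.subset_closure (by simp)
  -- every generator commutes with everything in H
  have hgen : ∀ p ∈ H, Commute x p ∧ Commute y p := by
    intro p hp
    induction hp using Subgroup.closure_induction with
    | mem q hq =>
      simp only [Set.mem_insert_iff, Set.mem_singleton_iff] at hq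
      rcases hq with rfl | rfl
      · exact ⟨Commute.refl _, h.symm⟩
      · exact ⟨h, Commute.refl _⟩
    | one => exact ⟨Commute.one_right x, Commute.one_right y⟩
    | mul p q _ _ hp hq => exact ⟨hp.1.mul_right hq.1, hp.2.mul_right hq.2⟩
    | inv p _ hp => exact ⟨hp.1.inv_right, hp.2.inv_right⟩
  have hcomm : ∀ p ∈ H, ∀ q ∈ H, Commute p q := by
    intro p hp
    induction hp using Subgroup.closure_induction with
    | mem w hw =>
      intro q hq
      simp only [Set.mem_insert_iff, Set.mem_singleton_iff] at hw
      rcases hw with rfl | rfl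
      · exact (hgen q hq).1
      · exact (hgen q hq).2
    | one => intro q hq; exact Commute.one_left q
    | mul p r _ _ hp hr => intro q hq; exact (hp q hq).mul_left (hr q hq)
    | inv p _ hp => intro q hq; exact (hp q hq).inv_left
  have : ∀ p q : H, Commute p q := by
    intro p q
    exact Subtype.ext (hcomm p p.2 q q.2)
  obtain ⟨z, hz⟩ := isFreeGroup_comm_cyclic this
  obtain ⟨m, hm⟩ := hz ⟨x, hxH⟩
  obtain ⟨n, hn⟩ := hz ⟨y, hyH⟩
  refine ⟨(z : FreeGroup β), m, n, ?_, ?_⟩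
  · have := congrArg (Subtype.val) hm
    simpa [SubgroupClass.coe_zpow] using this
  · have := congrArg (Subtype.val) hn
    simpa [SubgroupClass.coe_zpow] using this

/-- Encoding of integer multiplication via exponent-sum constraints in a free group:
for distinct generators `a ≠ b` and exponent-sum homomorphisms `φa`, `φb` (sending `a`
resp. `b` to `1` and all other generators to `0`), we have `t₃ = t₁ * t₂` iff there
exist `u, v` with `u` commuting with `b`, `v` commuting with `a * u`, `φb u = t₁`,
`φa v = t₂` and `φb v = t₃`. -/
theorem stmt_6 (α : Type*) (a b : α) (hab : a ≠ b)
    (φa φb : FreeGroup α →* Multiplicative ℤ)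
    (hφa1 : φa (FreeGroup.of a) = Multiplicative.ofAdd (1 : ℤ))
    (hφa0 : ∀ c : α, c ≠ a → φa (FreeGroup.of c) = 1)
    (hφb1 : φb (FreeGroup.of b) = Multiplicative.ofAdd (1 : ℤ))
    (hφb0 : ∀ c : α, c ≠ b → φb (FreeGroup.of c) = 1)
    (t₁ t₂ t₃ : ℤ) :
    t₃ = t₁ * t₂ ↔
      ∃ u v : FreeGroup α,
        Commute u (FreeGroup.of b) ∧
        Commute v (FreeGroup.of a * u) ∧
        Multiplicative.toAdd (φb u) = t₁ ∧
        Multiplicative.toAdd (φa v) = t₂ ∧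
        Multiplicative.toAdd (φb v) = t₃ := by
  have hφab : φa (FreeGroup.of b) = 1 := hφa0 b hab.symm
  have hφba : φb (FreeGroup.of a) = 1 := hφb0 a hab
  constructor
  · rintro rfl
    refine ⟨FreeGroup.of b ^ t₁, (FreeGroup.of a * FreeGroup.of b ^ t₁) ^ t₂, ?_, ?_, ?_, ?_, ?_⟩
    · exact (Commute.refl (FreeGroup.of b)).zpow_left t₁
    · exact (Commute.refl _).zpow_left t₂
    · simp [map_zpow, hφb1, toAdd_zpow]
    · simp [map_zpow, map_mul, hφa1, hφab, toAdd_zpow]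
    · simp only [map_zpow, map_mul, hφb1, hφba, one_mul, toAdd_zpow, ← zpow_mul]
      simp [toAdd_zpow, mul_comm]
  · rintro ⟨u, v, hu, hv, h1, h2, h3⟩
    have key : ∀ (φ : FreeGroup α →* Multiplicative ℤ) (w : FreeGroup α) (k : ℤ),
        Multiplicative.toAdd (φ (w ^ k)) = k * Multiplicative.toAdd (φ w) := by
      intro φ w k
      rw [map_zpow, toAdd_zpow, smul_eq_mul]
    -- u commutes with of b
    obtain ⟨z, m, n, hum, hbn⟩ := freeGroup_commute_common_power hu
    have hnr : n * Multiplicative.toAdd (φa z) = 0 := by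
      rw [← key, ← hbn, hφab]; rfl
    have hns : n * Multiplicative.toAdd (φb z) = 1 := by
      rw [← key, ← hbn, hφb1]; rfl
    have hn0 : n ≠ 0 := by rintro rfl; simp at hns
    have hr0 : Multiplicative.toAdd (φa z) = 0 := by
      rcases mul_eq_zero.mp hnr with h' | h'
      · exact absurd h' hn0
      · exact h'
    have hφau : Multiplicative.toAdd (φa u) = 0 := by
      rw [hum, key, hr0, mul_zero]
    -- v commutes with of a * u
    obtain ⟨z', m', n', hvm, hwn⟩ := freeGroup_commute_common_power hv
    have hφaw : Multiplicative.toAdd (φa (FreeGroup.of a * u)) = 1 := by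
      rw [map_mul, toAdd_mul, hφau, hφa1, add_zero]; rfl
    have hφbw : Multiplicative.toAdd (φb (FreeGroup.of a * u)) = t₁ := by
      rw [map_mul, toAdd_mul, h1, hφba]; simp
    have e1 : n' * Multiplicative.toAdd (φa z') = 1 := by
      rw [← key, ← hwn]; exact hφaw
    have e2 : n' * Multiplicative.toAdd (φb z') = t₁ := by
      rw [← key, ← hwn]; exact hφbw
    have e3 : m' * Multiplicative.toAdd (φa z') = t₂ := by
      rw [← key, ← hvm]; exact h2
    have e4 : m' * Multiplicative.toAdd (φb z') = t₃ := by
      rw [← key, ← hvm]; exact h3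
    calc t₃ = m' * Multiplicative.toAdd (φb z') := e4.symm
      _ = (m' * Multiplicative.toAdd (φb z')) * (n' * Multiplicative.toAdd (φa z')) := by
          rw [e1, mul_one]
      _ = (n' * Multiplicative.toAdd (φb z')) * (m' * Multiplicative.toAdd (φa z')) := by ring
      _ = t₁ * t₂ := by rw [e2, e3]
end

section
/- Let Γ be a simple graph on a finite vertex set V and let S ⊆ V be a weak module. Then V ∖ S = ⋃_{u ∈ V ∖ star(S)} star(u); that is, a vertex w lies outside S if and only if w belongs to star(u) for some vertex u not in star(S). -/
/-- The star of a vertex: the vertex together with its neighbours. -/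
def vertexStar {V : Type*} (Γ : SimpleGraph V) (v : V) : Set V :=
  insert v (Γ.neighborSet v)

/-- The star of a set of vertices: `S` together with the common neighbours of `S`. -/
def setStar {V : Type*} (Γ : SimpleGraph V) (S : Set V) : Set V :=
  S ∪ ⋂ v ∈ S, Γ.neighborSet v

/-- A vertex is minimal if no vertex has a strictly smaller star. -/
def IsMinVertex {V : Type*} (Γ : SimpleGraph V) (v : V) : Prop :=
  ∀ u : V, vertexStar Γ u ⊆ vertexStar Γ v → vertexStar Γ u = vertexStar Γ v

/-- A weak set: a nonempty set of minimal vertices, all with the same star. -/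
def IsWeakSet {V : Type*} (Γ : SimpleGraph V) (S : Set V) : Prop :=
  S.Nonempty ∧ (∀ v ∈ S, IsMinVertex Γ v) ∧
    ∀ u ∈ S, ∀ v ∈ S, vertexStar Γ u = vertexStar Γ v

/-- A weak module: a weak set which is maximal under inclusion among weak sets. -/
def IsWeakModule {V : Type*} (Γ : SimpleGraph V) (S : Set V) : Prop :=
  IsWeakSet Γ S ∧ ∀ T : Set V, IsWeakSet Γ T → S ⊆ T → T = S

lemma mem_vertexStar_comm {V : Type*} {Γ : SimpleGraph V} {u w : V} :
    w ∈ vertexStar Γ u ↔ u ∈ vertexStar Γ w := by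
  simp only [vertexStar, Set.mem_insert_iff, SimpleGraph.mem_neighborSet]
  constructor <;> (rintro (h | h); exacts [Or.inl h.symm, Or.inr h.symm])

/-- For a weak module `S`, the complement of `S` is the union of the stars of the
vertices lying outside `star S`. -/
theorem stmt_10 (V : Type*) [Fintype V] (Γ : SimpleGraph V) (S : Set V)
    (hS : IsWeakModule Γ S) :
    Sᶜ = ⋃ u ∈ (setStar Γ S)ᶜ, vertexStar Γ u := by
  obtain ⟨⟨⟨v0, hv0⟩, hmin, heq⟩, hmax⟩ := hS
  ext w
  simp only [Set.mem_compl_iff, Set.mem_iUnion, exists_prop]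
  constructor
  · intro hwS
    by_contra h
    push_neg at h
    have hw : ∀ u, w ∈ vertexStar Γ u → u ∈ setStar Γ S := by
      intro u hu
      by_contra hc
      exact h u hc hu
    have hwstar : w ∈ setStar Γ S := hw w (Set.mem_insert _ _)
    have hsub : vertexStar Γ w ⊆ vertexStar Γ v0 := by
      intro x hx
      have hxs : x ∈ setStar Γ S := hw x (mem_vertexStar_comm.mp hx)
      rcases hxs with h' | h'
      · rw [← heq x h' v0 hv0]; exact Set.mem_insert _ _
      · exact Set.mem_insert_of_mem _ (by simpa using Set.mem_iInter₂.mp h' v0 hv0)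
    have hstar : vertexStar Γ w = vertexStar Γ v0 := hmin v0 hv0 w hsub
    have hT : IsWeakSet Γ (insert w S) := by
      refine ⟨⟨w, Set.mem_insert _ _⟩, ?_, ?_⟩
      · rintro v (rfl | hv)
        · intro u hu
          rw [hstar] at hu ⊢
          exact hmin v0 hv0 u hu
        · exact hmin v hv
      · have key : ∀ c ∈ insert w S, vertexStar Γ c = vertexStar Γ v0 := by
          rintro c (rfl | hc)
          · exact hstar
          · exact heq c hc v0 hv0
        intro a ha b hb
        rw [key a ha, key b hb]
    have := hmax _ hT (Set.subset_insert _ _)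
    exact hwS (this ▸ Set.mem_insert w S)
  · rintro ⟨u, hu, hwu⟩ hwS
    apply hu
    have huw : u ∈ vertexStar Γ w := mem_vertexStar_comm.mp hwu
    rcases huw with rfl | h'
    · exact Or.inl hwS
    · right
      apply Set.mem_iInter₂.mpr
      intro v hv
      have hvw : vertexStar Γ v = vertexStar Γ w := heq v hv w hwS
      have : u ∈ vertexStar Γ v := by
        rw [hvw]; exact Set.mem_insert_of_mem _ h'
      rcases this with rfl | h''
      · exact absurd (Or.inl hv : u ∈ setStar Γ S) hu
      · exact h''
end

section
/- Let Γ be a simple graph on a finite nonempty vertex set V, and suppose that for any two weak modules S and T of Γ we have star(S) ∩ T ≠ ∅ (i.e. some vertex of S is adjacent to, or equal to, some vertex of T). Let M be the set of all minimal vertices of Γ. Then M is a clique, and M ⊆ star(u) for every vertex u ∈ V (every vertex of Γ is adjacent to, or equal to, every minimal vertex). -/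
lemma mem_vertexStar_self {V : Type*} (Γ : SimpleGraph V) (v : V) :
    v ∈ vertexStar Γ v := Set.mem_insert _ _

lemma module_of_min {V : Type*} (Γ : SimpleGraph V) {u : V} (hu : IsMinVertex Γ u) :
    IsWeakModule Γ {v | IsMinVertex Γ v ∧ vertexStar Γ v = vertexStar Γ u} := by
  constructor
  · refine ⟨⟨u, hu, rfl⟩, fun v hv => hv.1, fun a ha b hb => ?_⟩
    rw [ha.2, hb.2]
  · rintro T ⟨hTne, hTmin, hTeq⟩ hsub
    apply Set.Subset.antisymm _ hsub
    intro t ht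
    exact ⟨hTmin t ht, hTeq t ht u (hsub ⟨hu, rfl⟩)⟩

lemma min_mem_star {V : Type*} (Γ : SimpleGraph V)
    (h : ∀ S T : Set V, IsWeakModule Γ S → IsWeakModule Γ T →
      (setStar Γ S ∩ T).Nonempty)
    {m n : V} (hm : IsMinVertex Γ m) (hn : IsMinVertex Γ n) :
    m ∈ vertexStar Γ n := by
  obtain ⟨t, htS, htT⟩ := h _ _ (module_of_min Γ hm) (module_of_min Γ hn)
  have hstn : vertexStar Γ t = vertexStar Γ n := htT.2
  rcases htS with htS | htS
  · -- t ∈ S_m, so star t = star m = star n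
    have : vertexStar Γ m = vertexStar Γ n := by rw [← htS.2, hstn]
    rw [← this]; exact mem_vertexStar_self Γ m
  · -- t is a common neighbour of S_m, in particular adjacent to m
    have hadj : t ∈ Γ.neighborSet m := by
      have := Set.mem_iInter₂.mp htS m ⟨hm, rfl⟩
      exact this
    have : m ∈ vertexStar Γ t := Or.inr (Γ.adj_symm hadj)
    rwa [hstn] at this

/-- If any two weak modules `S`, `T` satisfy `star S ∩ T ≠ ∅`, then the set `M` of
minimal vertices is a clique and `M ⊆ star u` for every vertex `u`. -/
theorem stmt_11 (V : Type*) [Fintype V] [Nonempty V] (Γ : SimpleGraph V)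
    (h : ∀ S T : Set V, IsWeakModule Γ S → IsWeakModule Γ T →
      (setStar Γ S ∩ T).Nonempty) :
    Γ.IsClique {v : V | IsMinVertex Γ v} ∧
      ∀ u : V, {v : V | IsMinVertex Γ v} ⊆ vertexStar Γ u := by
  constructor
  · intro m hm n hn hne
    have := min_mem_star Γ h hm hn
    rcases this with h' | h'
    · exact absurd h' hne
    · exact Γ.adj_symm h'
  · intro u m hm
    -- find a minimal vertex a with star a ⊆ star u
    obtain ⟨a, ha, hamin⟩ :=
      Set.Finite.exists_minimalFor (vertexStar Γ)
        {x | vertexStar Γ x ⊆ vertexStar Γ u} (Set.toFinite _)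
        ⟨u, Set.mem_setOf.mpr subset_rfl⟩
    have haMin : IsMinVertex Γ a := by
      intro x hx
      exact Set.Subset.antisymm hx (hamin (hx.trans ha) hx)
    have : m ∈ vertexStar Γ a := min_mem_star Γ h hm haMin
    exact ha this
end

section
/- Let G be a group, s ∈ G, and H a subgroup of the abelianization Ab(G) such that Ab(G) is the internal direct product of ⟨ab(s)⟩ and H and ab(s) has infinite order. Let g ∈ G satisfy ab(g) ∈ H. Then s·g is a primitive element of G: s·g has infinite order, and for all h ∈ G and all integers n, if s·g = h^n then n = 1 or n = -1. -/
/-- If `s` is abelian-primitive with complement `H` and `ab g ∈ H`, then `s * g` is a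
primitive element: it has infinite order and is not a proper power. -/
theorem stmt_16 (G : Type*) [Group G] (s : G) (H : Subgroup (Abelianization G))
    (hinf : Subgroup.zpowers (Abelianization.of s) ⊓ H = ⊥)
    (hsup : Subgroup.zpowers (Abelianization.of s) ⊔ H = ⊤)
    (hord : ¬ IsOfFinOrder (Abelianization.of s))
    (g : G) (hg : Abelianization.of g ∈ H) :
    ¬ IsOfFinOrder (s * g) ∧
      ∀ (h : G) (n : ℤ), s * g = h ^ n → n = 1 ∨ n = -1 := by
  set π : Abelianization G →* Abelianization G ⧸ H := QuotientGroup.mk' H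
  set φ : G →* Abelianization G ⧸ H := π.comp Abelianization.of
  set x : Abelianization G ⧸ H := φ s with hx
  -- x has infinite order
  have hxord : ¬ IsOfFinOrder x := by
    intro hfin
    obtain ⟨n, hn, hpow⟩ := isOfFinOrder_iff_pow_eq_one.mp hfin
    have h1 : (Abelianization.of s) ^ n ∈ H := by
      have : π ((Abelianization.of s) ^ n) = 1 := by
        simpa [x, φ, π, map_pow] using hpow
      exact (QuotientGroup.eq_one_iff _).mp this
    have h2 : (Abelianization.of s) ^ n ∈ Subgroup.zpowers (Abelianization.of s) ⊓ H :=
      ⟨⟨(n : ℤ), by simp [zpow_natCast]⟩, h1⟩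
    rw [hinf, Subgroup.mem_bot] at h2
    exact hord (isOfFinOrder_iff_pow_eq_one.mpr ⟨n, hn, h2⟩)
  -- φ (s * g) = x
  have hφg : φ g = 1 := by
    simpa [φ, π, QuotientGroup.eq_one_iff] using hg
  have hφsg : φ (s * g) = x := by
    rw [map_mul, hφg, mul_one]
  -- every element of the quotient is a zpow of x
  have hgen : ∀ q : Abelianization G ⧸ H, ∃ m : ℤ, q = x ^ m := by
    intro q
    obtain ⟨a, rfl⟩ := QuotientGroup.mk'_surjective H q
    have ha : a ∈ Subgroup.zpowers (Abelianization.of s) ⊔ H := by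
      rw [hsup]; trivial
    rw [Subgroup.mem_sup] at ha
    obtain ⟨y, ⟨m, hm⟩, z, hz, rfl⟩ := ha
    refine ⟨m, ?_⟩
    have hzq : π z = 1 := by simpa [π, QuotientGroup.eq_one_iff] using hz
    simp only [← hm]
    calc π ((Abelianization.of s) ^ m * z) = (π (Abelianization.of s)) ^ m * π z := by
          rw [map_mul, map_zpow]
      _ = x ^ m := by rw [hzq, mul_one]; rfl
  constructor
  · intro hfin
    exact hxord (hφsg ▸ φ.isOfFinOrder hfin)
  · intro h n hn
    obtain ⟨m, hm⟩ := hgen (φ h)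
    have : x = x ^ (m * n) := by
      have := congrArg φ hn
      rw [hφsg, map_zpow, hm, ← zpow_mul] at this
      exact this
    have hmn : m * n = 1 := by
      by_contra hne
      apply hxord
      have : x ^ (m * n - 1) = 1 := by
        rw [zpow_sub, zpow_one, ← this, mul_inv_cancel]
      refine isOfFinOrder_iff_zpow_eq_one.mpr ⟨m * n - 1, by omega, this⟩
    have : IsUnit n := IsUnit.of_mul_eq_one (a := n) m (by linarith [hmn] )
    rcases Int.isUnit_iff.mp this with h1 | h1
    · exact Or.inl h1
    · exact Or.inr h1
end
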